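/- Let n ≥ 1 and let 0 ≤ i ≤ j ≤ n with i + j ≤ n. Then there exists a nonzero function f : Σ_2^n → ℝ in U_{[i,j]}(n,2) whose support has cardinality exactly 2^{n-j}. -/

import Mathlib

/-- `f` belongs to the eigenspace `U_k(n,q)` of the Hamming graph `H(n,q)`,
i.e. `λ_k(n,q) · f(x) = Σ_{y ∈ N(x)} f(y)` for every vertex `x`, where
`λ_k(n,q) = n(q-1) - q·k` and `N(x)` is the set of vertices at Hamming distance 1 from `x`. -/
def inU (n q k : ℕ) (f : (Fin n → Fin q) → ℝ) : Prop :=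
  ∀ x : Fin n → Fin q,
    ((n : ℝ) * ((q : ℝ) - 1) - (q : ℝ) * (k : ℝ)) * f x =
      ∑ y ∈ Finset.univ.filter (fun y : Fin n → Fin q => hammingDist x y = 1), f y

/-- `f` belongs to the direct sum `U_{[i,j]}(n,q) = U_i(n,q) ⊕ … ⊕ U_j(n,q)`,
i.e. `f = Σ_{k=i}^{j} g_k` with `g_k ∈ U_k(n,q)`. -/
def inUIJ (n q i j : ℕ) (f : (Fin n → Fin q) → ℝ) : Prop :=
  ∃ g : ℕ → (Fin n → Fin q) → ℝ,
    (∀ k ∈ Finset.Icc i j, inU n q k (g k)) ∧ f = ∑ k ∈ Finset.Icc i j, g k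

/-- The cardinality of the support of `f`. -/
noncomputable def suppCard (n q : ℕ) (f : (Fin n → Fin q) → ℝ) : ℕ :=
  (Finset.univ.filter (fun x : Fin n → Fin q => f x ≠ 0)).card

open Finset

def chi {n : ℕ} (S : Finset (Fin n)) (x : Fin n → Fin 2) : ℝ :=
  ∏ s ∈ S, (-1 : ℝ) ^ (x s : ℕ)

lemma fin2_flip (a : Fin 2) : (-1 : ℝ) ^ ((a + 1 : Fin 2) : ℕ) = -(-1 : ℝ) ^ (a : ℕ) := by
  fin_cases a <;> norm_num [show ((2:Fin 2):ℕ) = 0 from rfl, show ((1 + 1:Fin 2):ℕ) = 0 from rfl]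

lemma fin2_add_self_ne (a : Fin 2) : a + 1 ≠ a := by fin_cases a <;> decide

lemma fin2_ne_imp {u v : Fin 2} (h : u ≠ v) : v = u + 1 := by
  revert h; revert u v; decide

lemma neighbors_eq {n : ℕ} (x : Fin n → Fin 2) :
    Finset.univ.filter (fun y : Fin n → Fin 2 => hammingDist x y = 1) =
      Finset.univ.image (fun m : Fin n => Function.update x m (x m + 1)) := by
  ext y
  simp only [mem_filter, mem_univ, true_and, mem_image]
  constructor
  · intro hy
    rw [hammingDist, Finset.card_eq_one] at hy
    obtain ⟨m, hm⟩ := hy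
    refine ⟨m, ?_⟩
    funext m'
    rcases eq_or_ne m' m with rfl | hne
    · have h : x m' ≠ y m' := by
        have : m' ∈ ({m'} : Finset (Fin n)) := mem_singleton_self m'
        rw [← hm] at this
        exact (mem_filter.mp this).2
      rw [Function.update_self]
      exact (fin2_ne_imp h).symm
    · rw [Function.update_of_ne hne]
      have : m' ∉ ({m} : Finset (Fin n)) := by simpa using hne
      rw [← hm, mem_filter] at this
      have := fun h => this ⟨mem_univ _, h⟩
      simpa using this
  · rintro ⟨m, rfl⟩
    rw [hammingDist, Finset.card_eq_one]
    refine ⟨m, ?_⟩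
    ext m'
    simp only [mem_filter, mem_univ, true_and, mem_singleton]
    constructor
    · intro h
      by_contra hne
      rw [Function.update_of_ne hne] at h
      exact h rfl
    · rintro rfl
      rw [Function.update_self]
      exact fun h => fin2_add_self_ne (x m') h.symm

lemma update_inj {n : ℕ} (x : Fin n → Fin 2) :
    Function.Injective (fun m : Fin n => Function.update x m (x m + 1)) := by
  intro a b hab
  by_contra hne
  have := congrFun hab a
  simp only [] at this
  rw [Function.update_self, Function.update_of_ne hne] at this
  exact fin2_add_self_ne (x a) this

lemma sum_neighbors {n : ℕ} (x : Fin n → Fin 2) (F : (Fin n → Fin 2) → ℝ) :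
    ∑ y ∈ Finset.univ.filter (fun y : Fin n → Fin 2 => hammingDist x y = 1), F y =
      ∑ m : Fin n, F (Function.update x m (x m + 1)) := by
  rw [neighbors_eq, Finset.sum_image]
  intro a _ b _ h
  exact update_inj x h

lemma chi_update {n : ℕ} (S : Finset (Fin n)) (x : Fin n → Fin 2) (m : Fin n) :
    chi S (Function.update x m (x m + 1)) = (if m ∈ S then -1 else 1) * chi S x := by
  by_cases hm : m ∈ S
  · rw [if_pos hm]
    unfold chi
    rw [← Finset.mul_prod_erase _ _ hm, ← Finset.mul_prod_erase _ (fun s => (-1:ℝ)^(x s : ℕ)) hm]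
    rw [Function.update_self, fin2_flip]
    rw [Finset.prod_congr rfl (fun s hs => by
      rw [Function.update_of_ne (Finset.ne_of_mem_erase hs)])]
    ring
  · rw [if_neg hm, one_mul]
    unfold chi
    exact Finset.prod_congr rfl fun s hs =>
      by rw [Function.update_of_ne (fun h => hm (by rw [← h]; exact hs))]

lemma chi_inU {n : ℕ} (S : Finset (Fin n)) : inU n 2 S.card (chi S) := by
  intro x
  rw [sum_neighbors]
  have : ∀ m : Fin n, chi S (Function.update x m (x m + 1)) =
      (if m ∈ S then (-1:ℝ) else 1) * chi S x := fun m => chi_update S x m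
  rw [Finset.sum_congr rfl (fun m _ => this m), ← Finset.sum_mul]
  congr 1
  have : ∀ m : Fin n, (if m ∈ S then (-1:ℝ) else 1) = 1 - 2 * (if m ∈ S then 1 else 0) := by
    intro m; by_cases h : m ∈ S <;> norm_num [h]
  rw [Finset.sum_congr rfl (fun m _ => this m)]
  rw [Finset.sum_sub_distrib, ← Finset.mul_sum, Finset.sum_boole]
  simp only [Finset.sum_const, Finset.card_univ, Fintype.card_fin, nsmul_eq_mul, mul_one]
  have : (Finset.univ.filter (fun m => m ∈ S)).card = S.card := by
    congr 1; ext m; simp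
  rw [this]
  push_cast
  ring

def co (n : ℕ) (hn : 0 < n) (m : ℕ) : Fin n := ⟨m % n, Nat.mod_lt _ hn⟩

lemma co_val {n : ℕ} (hn : 0 < n) {m : ℕ} (hm : m < n) : ((co n hn m) : ℕ) = m :=
  Nat.mod_eq_of_lt hm

def coB (n i : ℕ) (hn : 0 < n) (t : ℕ) : Fin n :=
  if t < i then co n hn (2*t+1) else co n hn (i+t)

def coA (n : ℕ) (hn : 0 < n) (t : ℕ) : Fin n := co n hn (2*t)

noncomputable def BB (n i : ℕ) (hn : 0 < n) (t : ℕ) (x : Fin n → Fin 2) : ℝ :=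
  (if t < i then (-1:ℝ) else 1) * (-1:ℝ) ^ ((x (coB n i hn t)) : ℕ)

noncomputable def AA (n i : ℕ) (hn : 0 < n) (t : ℕ) (x : Fin n → Fin 2) : ℝ :=
  if t < i then (-1:ℝ) ^ ((x (coA n hn t)) : ℕ) else 1

noncomputable def ff (n i j : ℕ) (hn : 0 < n) (x : Fin n → Fin 2) : ℝ :=
  ∏ t ∈ range j, (BB n i hn t x + AA n i hn t x)

def SS (n i : ℕ) (hn : 0 < n) (T : Finset ℕ) : Finset (Fin n) :=
  T.image (coB n i hn) ∪ (range i \ T).image (coA n hn)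

noncomputable def cc (i : ℕ) (T : Finset ℕ) : ℝ := (-1:ℝ) ^ ((T.filter (fun t => t < i)).card)

section facts
variable {n i j : ℕ}

lemma coB_val (hn : 0 < n) (hij : i ≤ j) (hsum : i + j ≤ n) {t : ℕ} (ht : t < j) :
    ((coB n i hn t) : ℕ) = if t < i then 2*t+1 else i+t := by
  unfold coB
  by_cases h : t < i
  · rw [if_pos h, if_pos h, co_val hn (by omega)]
  · rw [if_neg h, if_neg h, co_val hn (by omega)]

lemma coA_val (hn : 0 < n) (hij : i ≤ j) (hsum : i + j ≤ n) {t : ℕ} (ht : t < i) : ((coA n hn t) : ℕ) = 2*t := by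
  unfold coA; exact co_val hn (by omega)

lemma coB_injOn (hn : 0 < n) (hij : i ≤ j) (hsum : i + j ≤ n) : Set.InjOn (coB n i hn) (range j : Finset ℕ) := by
  intro a ha b hb hab
  simp only [Finset.coe_range, Set.mem_Iio] at ha hb
  have := congrArg Fin.val hab
  rw [coB_val hn hij hsum ha, coB_val hn hij hsum hb] at this
  by_cases h1 : a < i <;> by_cases h2 : b < i <;> simp [h1, h2] at this <;> omega

lemma coA_injOn (hn : 0 < n) (hij : i ≤ j) (hsum : i + j ≤ n) : Set.InjOn (coA n hn) (range i : Finset ℕ) := by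
  intro a ha b hb hab
  simp only [Finset.coe_range, Set.mem_Iio] at ha hb
  have := congrArg Fin.val hab
  rw [coA_val hn hij hsum ha, coA_val hn hij hsum hb] at this
  omega

lemma SS_disj (hn : 0 < n) (hij : i ≤ j) (hsum : i + j ≤ n) {T : Finset ℕ} (hT : T ⊆ range j) :
    Disjoint (T.image (coB n i hn)) ((range i \ T).image (coA n hn)) := by
  rw [Finset.disjoint_left]
  rintro m hm hm'
  obtain ⟨a, ha, rfl⟩ := Finset.mem_image.mp hm
  obtain ⟨b, hb, hab⟩ := Finset.mem_image.mp hm'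
  have ha' : a < j := Finset.mem_range.mp (hT ha)
  have hb' : b < i := Finset.mem_range.mp (Finset.mem_sdiff.mp hb).1
  have := congrArg Fin.val hab
  rw [coB_val hn hij hsum ha', coA_val hn hij hsum hb'] at this
  by_cases h1 : a < i <;> simp [h1] at this <;> omega

lemma card_SS (hn : 0 < n) (hij : i ≤ j) (hsum : i + j ≤ n) {T : Finset ℕ} (hT : T ⊆ range j) :
    (SS n i hn T).card = i + (T.filter (fun t => i ≤ t)).card := by
  unfold SS
  rw [Finset.card_union_of_disjoint (SS_disj hn hij hsum hT),
    Finset.card_image_of_injOn ((coB_injOn hn hij hsum).mono (Finset.coe_subset.mpr hT)),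
    Finset.card_image_of_injOn ((coA_injOn hn hij hsum).mono
      (Finset.coe_subset.mpr Finset.sdiff_subset))]
  have h0 : range i \ T = range i \ (T.filter (fun t => t < i)) := by
    ext t
    simp only [Finset.mem_sdiff, Finset.mem_range, Finset.mem_filter]
    tauto
  have h1 : (range i \ T).card = i - (T.filter (fun t => t < i)).card := by
    rw [h0, Finset.card_sdiff_of_subset (fun t ht => Finset.mem_range.mpr (Finset.mem_filter.mp ht).2),
      Finset.card_range]
  have h2 : (T.filter (fun t => t < i)).card + (T.filter (fun t => i ≤ t)).card = T.card := by
    have e : T.filter (fun a => ¬ a < i) = T.filter (fun t => i ≤ t) := by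
      apply Finset.filter_congr; intro t _; simp [Nat.not_lt]
    rw [← e]
    exact Finset.card_filter_add_card_filter_not (p := fun t => t < i)
  have h3 : (T.filter (fun t => t < i)).card ≤ i := by
    calc (T.filter (fun t => t < i)).card ≤ (range i).card :=
          Finset.card_le_card (fun t ht => Finset.mem_range.mpr (Finset.mem_filter.mp ht).2)
      _ = i := Finset.card_range i
  omega
end facts

section facts2
variable {n i j : ℕ}

lemma term_eq (hn : 0 < n) (hij : i ≤ j) (hsum : i + j ≤ n) {T : Finset ℕ}
    (hT : T ⊆ range j) (x : Fin n → Fin 2) :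
    (∏ t ∈ T, BB n i hn t x) * ∏ t ∈ range j \ T, AA n i hn t x
      = cc i T * chi (SS n i hn T) x := by
  have hB : ∏ t ∈ T, BB n i hn t x
      = cc i T * ∏ t ∈ T, (-1:ℝ)^((x (coB n i hn t)):ℕ) := by
    unfold BB cc
    rw [Finset.prod_mul_distrib]
    congr 1
    rw [Finset.prod_ite, Finset.prod_const, Finset.prod_const, one_pow, mul_one]
  have hset : (range j \ T).filter (fun t => t < i) = range i \ T := by
    ext t
    simp only [Finset.mem_filter, Finset.mem_sdiff, Finset.mem_range]
    constructor
    · rintro ⟨⟨_, h2⟩, h3⟩; exact ⟨h3, h2⟩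
    · rintro ⟨h1, h2⟩; exact ⟨⟨by omega, h2⟩, h1⟩
  have hA : ∏ t ∈ range j \ T, AA n i hn t x
      = ∏ t ∈ range i \ T, (-1:ℝ)^((x (coA n hn t)):ℕ) := by
    unfold AA
    rw [Finset.prod_ite, Finset.prod_const, one_pow, mul_one, hset]
  rw [hB, hA, mul_assoc]
  congr 1
  unfold SS chi
  rw [Finset.prod_union (SS_disj hn hij hsum hT)]
  congr 1
  · rw [Finset.prod_image]
    intro a ha b hb hab
    exact coB_injOn hn hij hsum (by exact_mod_cast hT ha) (by exact_mod_cast hT hb) hab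
  · rw [Finset.prod_image]
    intro a ha b hb hab
    have ha' : a ∈ range i := (Finset.mem_sdiff.mp ha).1
    have hb' : b ∈ range i := (Finset.mem_sdiff.mp hb).1
    exact coA_injOn hn hij hsum (j := j) (by exact_mod_cast ha') (by exact_mod_cast hb') hab

lemma inU_sum {n q k : ℕ} {ι : Type} (A : Finset ι) (h : ι → (Fin n → Fin q) → ℝ)
    (H : ∀ T ∈ A, inU n q k (h T)) : inU n q k (fun x => ∑ T ∈ A, h T x) := by
  intro x
  simp only [Finset.mul_sum]
  rw [Finset.sum_congr rfl (fun T hT => H T hT x)]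
  exact Finset.sum_comm

lemma inU_smul {n q k : ℕ} (c : ℝ) (f : (Fin n → Fin q) → ℝ) (H : inU n q k f) :
    inU n q k (fun x => c * f x) := by
  intro x
  rw [mul_left_comm, H x, Finset.mul_sum]

lemma degree_mem (hij : i ≤ j) {T : Finset ℕ} (hT : T ⊆ range j) :
    i + (T.filter (fun t => i ≤ t)).card ∈ Finset.Icc i j := by
  have : T.filter (fun t => i ≤ t) ⊆ Finset.Ico i j := by
    intro t ht
    have h1 := (Finset.mem_filter.mp ht).2
    have h2 := Finset.mem_range.mp (hT (Finset.mem_filter.mp ht).1)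
    exact Finset.mem_Ico.mpr ⟨h1, h2⟩
  have := Finset.card_le_card this
  rw [Nat.card_Ico] at this
  rw [Finset.mem_Icc]
  omega

lemma inUIJ_ff (hn : 0 < n) (hij : i ≤ j) (hsum : i + j ≤ n) :
    inUIJ n 2 i j (ff n i j hn) := by
  refine ⟨fun k => fun x => ∑ T ∈ (range j).powerset.filter
      (fun T => i + (T.filter (fun t => i ≤ t)).card = k), cc i T * chi (SS n i hn T) x,
    ?_, ?_⟩
  · intro k hk
    apply inU_sum
    intro T hT
    obtain ⟨hT1, hT2⟩ := Finset.mem_filter.mp hT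
    have hT1' : T ⊆ range j := Finset.mem_powerset.mp hT1
    have hcard : (SS n i hn T).card = k := by
      rw [card_SS hn hij hsum hT1']; exact hT2
    have := inU_smul (cc i T) (chi (SS n i hn T)) (chi_inU (SS n i hn T))
    rwa [hcard] at this
  · funext x
    rw [Finset.sum_apply]
    rw [Finset.sum_congr rfl (fun k _ => rfl)]
    rw [Finset.sum_fiberwise_of_maps_to (fun T hT => degree_mem hij (Finset.mem_powerset.mp hT))
      (fun T => cc i T * chi (SS n i hn T) x)]
    unfold ff
    rw [Finset.prod_add]
    exact Finset.sum_congr rfl fun T hT =>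
      term_eq hn hij hsum (Finset.mem_powerset.mp hT) x

end facts2

def ee (n i : ℕ) (hn : 0 < n) (x : Fin n → Fin 2) : Fin n → Fin 2 :=
  fun m => if ((m : ℕ) % 2 = 1 ∧ (m : ℕ) < 2*i) then x m + x (co n hn ((m : ℕ) - 1)) + 1 else x m

lemma fin2_abab (a b : Fin 2) : a + b + 1 + b + 1 = a := by revert a b; decide

section facts3
variable {n i j : ℕ}

lemma ee_invol (hn : 0 < n) (x : Fin n → Fin 2) : ee n i hn (ee n i hn x) = x := by
  funext m
  unfold ee
  by_cases h : ((m : ℕ) % 2 = 1 ∧ (m : ℕ) < 2*i)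
  · rw [if_pos h, if_pos h]
    have hv : ((co n hn ((m : ℕ) - 1)) : ℕ) = (m : ℕ) - 1 :=
      co_val hn (by omega)
    have hc : ¬(((co n hn ((m : ℕ) - 1)) : ℕ) % 2 = 1 ∧
        ((co n hn ((m : ℕ) - 1)) : ℕ) < 2*i) := by
      rw [hv]; omega
    rw [if_neg hc]
    exact fin2_abab _ _
  · rw [if_neg h, if_neg h]

lemma aux1 (u v : Fin 2) : ((-1:ℝ)*(-1:ℝ)^(u:ℕ) + (-1:ℝ)^(v:ℕ) ≠ 0) ↔ u + v + 1 = 0 := by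
  fin_cases u <;> fin_cases v <;> simp <;> norm_num

lemma aux2 (u : Fin 2) : ((-1:ℝ)^(u:ℕ) + 1 ≠ 0) ↔ u = 0 := by
  fin_cases u <;> simp <;> norm_num

lemma factor_iff (hn : 0 < n) (hij : i ≤ j) (hsum : i + j ≤ n) {t : ℕ} (ht : t ∈ range j)
    (x : Fin n → Fin 2) :
    BB n i hn t x + AA n i hn t x ≠ 0 ↔ ee n i hn x (coB n i hn t) = 0 := by
  have ht' : t < j := Finset.mem_range.mp ht
  by_cases h : t < i
  · have hb : ((coB n i hn t) : ℕ) = 2*t+1 := by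
      rw [coB_val hn hij hsum ht']; simp [h]
    have cond : ((coB n i hn t : ℕ)) % 2 = 1 ∧ ((coB n i hn t : ℕ)) < 2*i := by
      rw [hb]; omega
    unfold ee BB AA
    rw [if_pos h, if_pos h, if_pos cond]
    have hidx : ((coB n i hn t) : ℕ) - 1 = 2*t := by omega
    rw [hidx]
    exact aux1 _ _
  · have hb : ((coB n i hn t) : ℕ) = i+t := by
      rw [coB_val hn hij hsum ht']; simp [h]
    have cond : ¬(((coB n i hn t : ℕ)) % 2 = 1 ∧ ((coB n i hn t : ℕ)) < 2*i) := by
      rw [hb]; omega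
    unfold ee BB AA
    rw [if_neg h, if_neg h, if_neg cond, one_mul]
    exact aux2 _

lemma ff_ne_iff (hn : 0 < n) (hij : i ≤ j) (hsum : i + j ≤ n) (x : Fin n → Fin 2) :
    ff n i j hn x ≠ 0 ↔ ∀ m ∈ (range j).image (coB n i hn), ee n i hn x m = 0 := by
  unfold ff
  rw [Finset.prod_ne_zero_iff]
  constructor
  · intro h m hm
    obtain ⟨t, ht, rfl⟩ := Finset.mem_image.mp hm
    exact (factor_iff hn hij hsum ht x).mp (h t ht)
  · intro h t ht
    exact (factor_iff hn hij hsum ht x).mpr (h _ (Finset.mem_image_of_mem _ ht))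

lemma count_zero (D : Finset (Fin n)) :
    (Finset.univ.filter (fun x : Fin n → Fin 2 => ∀ m ∈ D, x m = 0)).card
      = 2 ^ (n - D.card) := by
  have := Finset.card_bij'
    (s := Finset.univ.filter (fun x : Fin n → Fin 2 => ∀ m ∈ D, x m = 0))
    (t := (Finset.univ : Finset ((Dᶜ : Finset (Fin n)) → Fin 2)))
    (i := fun x _ => fun m => x m)
    (j := fun g _ => fun m => if h : m ∈ Dᶜ then g ⟨m, h⟩ else 0)
    (fun x hx => Finset.mem_univ _)
    (fun g hg => by
      rw [Finset.mem_filter]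
      refine ⟨Finset.mem_univ _, fun m hm => ?_⟩
      dsimp only
      rw [dif_neg (by simpa using hm)])
    (fun x hx => by
      funext m
      dsimp only
      by_cases h : m ∈ Dᶜ
      · rw [dif_pos h]
      · rw [dif_neg h]
        have := (Finset.mem_filter.mp hx).2
        exact (this m (by simpa using h)).symm)
    (fun g hg => by
      funext m
      dsimp only
      rw [dif_pos m.2])
  rw [this, Finset.card_univ, Fintype.card_fun, Fintype.card_coe, Fintype.card_fin,
    Finset.card_compl, Fintype.card_fin]

lemma card_D (hn : 0 < n) (hij : i ≤ j) (hsum : i + j ≤ n) :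
    ((range j).image (coB n i hn)).card = j := by
  rw [Finset.card_image_of_injOn (coB_injOn hn hij hsum), Finset.card_range]

lemma supp_ff (hn : 0 < n) (hij : i ≤ j) (hsum : i + j ≤ n) :
    (Finset.univ.filter (fun x : Fin n → Fin 2 => ff n i j hn x ≠ 0)).card = 2 ^ (n - j) := by
  set D := (range j).image (coB n i hn) with hD
  have key : (Finset.univ.filter (fun x : Fin n → Fin 2 => ff n i j hn x ≠ 0)).card
      = (Finset.univ.filter (fun x : Fin n → Fin 2 => ∀ m ∈ D, x m = 0)).card := by
    apply Finset.card_bij'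
      (i := fun x _ => ee n i hn x)
      (j := fun y _ => ee n i hn y)
    · intro x hx
      rw [Finset.mem_filter]
      refine ⟨Finset.mem_univ _, ?_⟩
      exact (ff_ne_iff hn hij hsum x).mp (Finset.mem_filter.mp hx).2
    · intro y hy
      rw [Finset.mem_filter]
      refine ⟨Finset.mem_univ _, ?_⟩
      rw [ff_ne_iff hn hij hsum]
      intro m hm
      rw [ee_invol]
      exact (Finset.mem_filter.mp hy).2 m hm
    · intro x _; exact ee_invol hn x
    · intro y _; exact ee_invol hn y
  rw [key, count_zero, card_D hn hij hsum]

end facts3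


/-- If `0 ≤ i ≤ j ≤ n` and `i + j ≤ n`, then there is a nonzero function in
`U_{[i,j]}(n,2)` whose support has cardinality exactly `2^{n-j}`. -/
theorem stmt1 (n i j : ℕ) (hn : 1 ≤ n) (hij : i ≤ j) (hjn : j ≤ n) (hsum : i + j ≤ n) :
    ∃ f : (Fin n → Fin 2) → ℝ, inUIJ n 2 i j f ∧ f ≠ 0 ∧ suppCard n 2 f = 2 ^ (n - j) := by
  have hn' : 0 < n := hn
  refine ⟨ff n i j hn', inUIJ_ff hn' hij hsum, ?_, ?_⟩
  · have hcard : (Finset.univ.filter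
        (fun x : Fin n → Fin 2 => ff n i j hn' x ≠ 0)).card = 2 ^ (n - j) :=
      supp_ff hn' hij hsum
    have hpos : 0 < (Finset.univ.filter
        (fun x : Fin n → Fin 2 => ff n i j hn' x ≠ 0)).card := by
      rw [hcard]; positivity
    obtain ⟨x, hx⟩ := Finset.card_pos.mp hpos
    intro h
    exact (Finset.mem_filter.mp hx).2 (congrFun h x)
  · exact supp_ff hn' hij hsum
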